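/- arXiv:1602.06512 — 2 statements merged into one kernel-verified Lean document; each statement's English description precedes it below -/
import Mathlib

section
/- (Proposition 2.1) The (|Δ|+|𝒞|)×(|Δ|+|𝒞|) coefficient matrix Q(z) of the linear system in Theorem 1.1 has determinant a nonzero polynomial in z; its unique highest-degree monomial is (−1)^{|Δ|+|𝒞|}·z^{|Δ|+∑_{A∈𝒞}|A|} / ∏_{A∈𝒞} P_{A_1→A_2⋯A_{|A|}}. Hence the linear system is nonsingular for all but finitely many z. -/
open MeasureTheory

section Patterns

variable {Ω Δ : Type*}

/-- Pattern `K` occurs as a run ending at time `n` (time indices start at 1). -/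
def occursAt (Z : ℕ → Ω → Δ) (K : List Δ) (ω : Ω) (n : ℕ) : Prop :=
  K.length ≤ n ∧ ∀ m : Fin K.length, Z (n - K.length + 1 + m) ω = K.get m

/-- First time `K` occurs as a run (`0` if it never occurs). -/
noncomputable def patTime (Z : ℕ → Ω → Δ) (K : List Δ) (ω : Ω) : ℕ :=
  sInf {n | occursAt Z K ω n}

/-- First time some pattern of `C` occurs as a run (`0` if never). -/
noncomputable def hitTime (Z : ℕ → Ω → Δ) (C : Finset (List Δ)) (ω : Ω) : ℕ :=
  sInf {n | ∃ K ∈ C, occursAt Z K ω n}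

/-- For `L = L₁L₂⋯Lₘ`, the product `P_{L₁L₂}⋯P_{L_{m-1}L_m}`; in particular
`tailProb Pm (i :: K) = P_{i→K}` in the notation of the paper. -/
def tailProb (Pm : Δ → Δ → ℝ) (L : List Δ) : ℝ :=
  (List.zipWith Pm L L.tail).prod

/-- `{Z_n}_{n≥1}` is a time homogeneous Markov chain with one-step transition
matrix `Pm`, expressed via cylinder events. -/
def IsMarkov [MeasurableSpace Ω] (P : Measure Ω) (Z : ℕ → Ω → Δ) (Pm : Δ → Δ → ℝ) : Prop :=
  ∀ (n : ℕ) (w : ℕ → Δ) (j : Δ), 1 ≤ n →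
    (P {ω | (∀ k, 1 ≤ k → k ≤ n → Z k ω = w k) ∧ Z (n+1) ω = j}).toReal
      = (P {ω | ∀ k, 1 ≤ k → k ≤ n → Z k ω = w k}).toReal * Pm (w n) j

/-- `F_i(z) = ∑_{n ≥ 1} P(Z_n = i, τ > n) z^{-n}`. -/
noncomputable def Fgen [MeasurableSpace Ω] (P : Measure Ω) (Z : ℕ → Ω → Δ)
    (C : Finset (List Δ)) (i : Δ) (z : ℝ) : ℝ :=
  ∑' n : ℕ, (P {ω | Z (n+1) ω = i ∧ n + 1 < hitTime Z C ω}).toReal * z⁻¹ ^ (n+1)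

/-- `f_K(z) = ∑_{n ≥ 1} P(τ = τ_K = n) z^{-n}`. -/
noncomputable def fgen [MeasurableSpace Ω] (P : Measure Ω) (Z : ℕ → Ω → Δ)
    (C : Finset (List Δ)) (K : List Δ) (z : ℝ) : ℝ :=
  ∑' n : ℕ, (P {ω | hitTime Z C ω = n + 1 ∧ patTime Z K ω = n + 1}).toReal * z⁻¹ ^ (n+1)

/-- The function `g̃_{KT}(z)` of the paper. -/
noncomputable def gtilde [DecidableEq Δ] (Pm : Δ → Δ → ℝ) (K T : List Δ) (z : ℝ) : ℝ :=
  ((∑ r ∈ Finset.Ico 1 T.length,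
      if r ≤ K.length ∧ K.drop (K.length - r) = T.take r then
        z ^ r * tailProb Pm (T.drop (r - 1)) else 0)
    + (if K = T then z ^ T.length else 0)) / tailProb Pm T

end Patterns

/-- The coefficient matrix `Q(z)` of the linear system (1.1) of Theorem 1.1. -/
noncomputable def Qmat {Δ : Type*} [Fintype Δ] [DecidableEq Δ] [Inhabited Δ]
    (Pm : Δ → Δ → ℝ) (C : Finset (List Δ)) (z : ℝ) :
    Matrix (Δ ⊕ {K : List Δ // K ∈ C}) (Δ ⊕ {K : List Δ // K ∈ C}) ℝ :=
  Matrix.of fun row col =>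
    match row, col with
    | Sum.inl j, Sum.inl i => Pm i j - (if i = j then z else 0)
    | Sum.inl j, Sum.inr K => -z * (if K.1.getLast? = some j then (1:ℝ) else 0)
    | Sum.inr T, Sum.inl i => Pm i T.1.headI
    | Sum.inr T, Sum.inr K => -(gtilde Pm K.1 T.1 z)

namespace Statement4Aux

open Polynomial

/-- Polynomial version of `gtilde`. -/
noncomputable def gpoly {Δ : Type*} [DecidableEq Δ] (Pm : Δ → Δ → ℝ) (K T : List Δ) : ℝ[X] :=
  ((∑ r ∈ Finset.Ico 1 T.length,
      if r ≤ K.length ∧ K.drop (K.length - r) = T.take r then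
        (X : ℝ[X]) ^ r * Polynomial.C (tailProb Pm (T.drop (r - 1))) else 0)
    + (if K = T then (X : ℝ[X]) ^ T.length else 0)) * Polynomial.C (tailProb Pm T)⁻¹

/-- Polynomial version of `Qmat`. -/
noncomputable def Qpoly {Δ : Type*} [Fintype Δ] [DecidableEq Δ] [Inhabited Δ]
    (Pm : Δ → Δ → ℝ) (S : Finset (List Δ)) :
    Matrix (Δ ⊕ {K : List Δ // K ∈ S}) (Δ ⊕ {K : List Δ // K ∈ S}) ℝ[X] :=
  Matrix.of fun row col =>
    match row, col with
    | Sum.inl j, Sum.inl i => Polynomial.C (Pm i j) - (if i = j then (X : ℝ[X]) else 0)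
    | Sum.inl j, Sum.inr K => -(X : ℝ[X]) * (if K.1.getLast? = some j then (1 : ℝ[X]) else 0)
    | Sum.inr T, Sum.inl i => Polynomial.C (Pm i T.1.headI)
    | Sum.inr T, Sum.inr K => -(gpoly Pm K.1 T.1)

lemma eval_gpoly {Δ : Type*} [DecidableEq Δ] (Pm : Δ → Δ → ℝ) (K T : List Δ) (z : ℝ) :
    (gpoly Pm K T).eval z = gtilde Pm K T z := by
  rw [gtilde, div_eq_mul_inv, gpoly]
  simp only [Polynomial.eval_mul, Polynomial.eval_add, Polynomial.eval_C,
    Polynomial.eval_finset_sum, apply_ite (Polynomial.eval z), Polynomial.eval_pow,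
    Polynomial.eval_X, Polynomial.eval_zero]


lemma map_Qpoly {Δ : Type*} [Fintype Δ] [DecidableEq Δ] [Inhabited Δ]
    (Pm : Δ → Δ → ℝ) (S : Finset (List Δ)) (z : ℝ) :
    (Qpoly Pm S).map (Polynomial.evalRingHom z) = Qmat Pm S z := by
  ext r c
  cases r <;> cases c <;>
    simp [Qpoly, Qmat, eval_gpoly, apply_ite (Polynomial.eval z)]

lemma coeff_prod_eq {ι : Type*} (s : Finset ι) (f : ι → ℝ[X]) (d : ι → ℕ)
    (h : ∀ i ∈ s, (f i).natDegree ≤ d i) :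
    (∏ i ∈ s, f i).coeff (∑ i ∈ s, d i) = ∏ i ∈ s, (f i).coeff (d i) := by
  induction s using Finset.cons_induction with
  | empty => simp
  | cons a s ha ih =>
    have hprod : (∏ i ∈ s, f i).natDegree ≤ ∑ i ∈ s, d i :=
      le_trans (Polynomial.natDegree_prod_le _ _)
        (Finset.sum_le_sum fun i hi => h i (Finset.mem_cons_of_mem hi))
    rw [Finset.prod_cons, Finset.sum_cons,
      Polynomial.coeff_mul_add_eq_of_natDegree_le (h a (Finset.mem_cons_self a s)) hprod,
      ih fun i hi => h i (Finset.mem_cons_of_mem hi), Finset.prod_cons]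

lemma natDegree_gpoly_le {Δ : Type*} [DecidableEq Δ] (Pm : Δ → Δ → ℝ) (K T : List Δ) :
    (gpoly Pm K T).natDegree ≤ T.length := by
  refine le_trans (Polynomial.natDegree_mul_le) ?_
  rw [Polynomial.natDegree_C, add_zero]
  refine le_trans (Polynomial.natDegree_add_le _ _) (max_le ?_ ?_)
  · refine Polynomial.natDegree_sum_le_of_forall_le _ _ fun r hr => ?_
    rw [Finset.mem_Ico] at hr
    split
    · refine le_trans (Polynomial.natDegree_mul_le) ?_
      simp only [Polynomial.natDegree_C, add_zero, Polynomial.natDegree_X_pow]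
      omega
    · simp
  · split
    · simp
    · simp

lemma coeff_gpoly_ne {Δ : Type*} [DecidableEq Δ] (Pm : Δ → Δ → ℝ) (K T : List Δ)
    (hKT : K ≠ T) : (gpoly Pm K T).coeff (T.length - 1 + 1) = 0 := by
  rw [gpoly, Polynomial.coeff_mul_C, if_neg hKT, add_zero, Polynomial.finset_sum_coeff]
  rw [Finset.sum_eq_zero, zero_mul]
  intro r hr
  rw [Finset.mem_Ico] at hr
  split
  · rw [mul_comm, Polynomial.coeff_C_mul, Polynomial.coeff_X_pow, if_neg (by omega), mul_zero]
  · simp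

lemma coeff_gpoly_diag {Δ : Type*} [DecidableEq Δ] (Pm : Δ → Δ → ℝ) (T : List Δ)
    (hT : T ≠ []) : (gpoly Pm T T).coeff (T.length - 1 + 1) = (tailProb Pm T)⁻¹ := by
  have hlen : 1 ≤ T.length := List.length_pos_iff.mpr hT
  have hN : T.length - 1 + 1 = T.length := by omega
  rw [gpoly, Polynomial.coeff_mul_C, Polynomial.coeff_add, Polynomial.finset_sum_coeff,
    Finset.sum_eq_zero, if_pos rfl, hN, Polynomial.coeff_X_pow, if_pos rfl, zero_add, one_mul]
  intro r hr
  rw [Finset.mem_Ico] at hr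
  split
  · rw [mul_comm, Polynomial.coeff_C_mul, Polynomial.coeff_X_pow, if_neg (by omega), mul_zero]
  · simp

end Statement4Aux

set_option maxHeartbeats 2000000 in
/-- Proposition 2.1: `det Q(z)` is a nonzero polynomial in `z` of degree
`|Δ| + ∑_{A∈𝒞}|A|`, with leading coefficient `(−1)^{|Δ|+|𝒞|} / ∏_{A∈𝒞} P_{A₁→A₂⋯A_{|A|}}`;
hence the linear system is nonsingular for all but finitely many `z`. -/
theorem statement4 {Δ : Type*} [Fintype Δ] [DecidableEq Δ] [Inhabited Δ]
    (Pm : Δ → Δ → ℝ) (C : Finset (List Δ)) (hne : ∀ K ∈ C, K ≠ [])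
    (hsub : ∀ K ∈ C, ∀ T ∈ C, K <:+: T → K = T)
    (hpos : ∀ K ∈ C, 0 < tailProb Pm K) :
    ∃ p : Polynomial ℝ,
      (∀ z : ℝ, p.eval z = (Qmat Pm C z).det) ∧
      p ≠ 0 ∧
      p.natDegree = Fintype.card Δ + ∑ A ∈ C, A.length ∧
      p.leadingCoeff = (-1) ^ (Fintype.card Δ + C.card) / ∏ A ∈ C, tailProb Pm A ∧
      {z : ℝ | (Qmat Pm C z).det = 0}.Finite := by
  classical
  open Statement4Aux in
  set n := Δ ⊕ {K : List Δ // K ∈ C} with hn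
  set e : n → ℕ := Sum.elim (fun _ => 0) (fun K => K.1.length - 1) with he
  set D : ℕ := Fintype.card Δ + ∑ A ∈ C, A.length with hD
  set M := Qpoly Pm C with hM
  set p := M.det with hp
  -- sum of the column degree bounds equals D
  have hsumD : ∑ c : n, (e c + 1) = D := by
    rw [Fintype.sum_sum_type]
    simp only [he, Sum.elim_inl, Sum.elim_inr, zero_add]
    rw [Finset.sum_const, Finset.card_univ, smul_eq_mul, mul_one]
    congr 1
    rw [← Finset.sum_coe_sort C (fun A => A.length)]
    refine Finset.sum_congr rfl fun K _ => ?_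
    have : K.1 ≠ [] := hne K.1 K.2
    have : 1 ≤ K.1.length := List.length_pos_iff.mpr this
    omega
  -- entrywise degree bound
  have hbound : ∀ r c : n, (M r c).natDegree ≤ e r + 1 := by
    rintro (j | T) (i | K)
    · simp only [hM, Qpoly, Matrix.of_apply, he, Sum.elim_inl, zero_add]
      refine le_trans (Polynomial.natDegree_sub_le _ _) (max_le (by simp) ?_)
      split <;> simp
    · simp only [hM, Qpoly, Matrix.of_apply, he, Sum.elim_inl, zero_add]
      refine le_trans (Polynomial.natDegree_mul_le) ?_
      simp only [Polynomial.natDegree_neg, Polynomial.natDegree_X]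
      split <;> simp
    · simp [hM, Qpoly, he]
    · simp only [hM, Qpoly, Matrix.of_apply, he, Sum.elim_inr, Polynomial.natDegree_neg]
      refine le_trans (natDegree_gpoly_le Pm K.1 T.1) (by omega)
  -- the key coefficient computation
  have hterm : ∀ σ : Equiv.Perm n,
      (∏ c : n, M (σ c) c).coeff D = ∏ c : n, (M (σ c) c).coeff (e (σ c) + 1) := by
    intro σ
    have hDσ : D = ∑ c : n, (e (σ c) + 1) := by
      rw [← hsumD, Equiv.sum_comp σ (fun c => e c + 1)]
    rw [hDσ]
    exact coeff_prod_eq Finset.univ _ _ fun c _ => hbound (σ c) c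
  -- off-identity terms vanish
  have hvanish : ∀ σ : Equiv.Perm n, σ ≠ 1 →
      (∏ c : n, (M (σ c) c).coeff (e (σ c) + 1)) = 0 := by
    intro σ hσ
    by_contra hprod
    have hfac : ∀ c : n, (M (σ c) c).coeff (e (σ c) + 1) ≠ 0 := by
      intro c
      exact Finset.prod_ne_zero_iff.mp hprod c (Finset.mem_univ c)
    have hinl : ∀ i : Δ, σ (Sum.inl i) = Sum.inl i := by
      intro i
      have h := hfac (Sum.inl i)
      rcases hσi : σ (Sum.inl i) with j | T
      · rw [hσi] at h
        by_cases hij : i = j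
        · rw [hij]
        · exfalso
          apply h
          simp [hM, Qpoly, he, hij, Polynomial.coeff_C]
      · exfalso
        rw [hσi] at h
        apply h
        simp [hM, Qpoly, he, Polynomial.coeff_C]
    have hinr : ∀ K : {K : List Δ // K ∈ C}, σ (Sum.inr K) = Sum.inr K := by
      intro K
      have h := hfac (Sum.inr K)
      rcases hσK : σ (Sum.inr K) with j | T
      · exfalso
        have : σ (Sum.inl j) = σ (Sum.inr K) := by rw [hσK, hinl j]
        exact absurd (σ.injective this) (by simp)
      · rw [hσK] at h
        by_cases hKT : K = T
        · rw [hKT]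
        · exfalso
          apply h
          have hKT' : K.1 ≠ T.1 := fun hh => hKT (Subtype.ext hh)
          simp [hM, Qpoly, he, Polynomial.coeff_neg, coeff_gpoly_ne Pm K.1 T.1 hKT']
    apply hσ
    ext c
    rcases c with i | K
    · exact hinl i
    · exact hinr K
  -- identity term
  have hC : (∏ A ∈ C, tailProb Pm A) ≠ 0 :=
    ne_of_gt (Finset.prod_pos hpos)
  have hidterm : (∏ c : n, (M c c).coeff (e c + 1))
      = (-1 : ℝ) ^ (Fintype.card Δ + C.card) / ∏ A ∈ C, tailProb Pm A := by
    rw [Fintype.prod_sum_type]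
    have h1 : ∀ i : Δ, (M (Sum.inl i) (Sum.inl i)).coeff (e (Sum.inl i) + 1) = -1 := by
      intro i
      simp [hM, Qpoly, he, Polynomial.coeff_C]
    have h2 : ∀ K : {K : List Δ // K ∈ C},
        (M (Sum.inr K) (Sum.inr K)).coeff (e (Sum.inr K) + 1) = -(tailProb Pm K.1)⁻¹ := by
      intro K
      simp [hM, Qpoly, he, Polynomial.coeff_neg, coeff_gpoly_diag Pm K.1 (hne K.1 K.2)]
    rw [Finset.prod_congr rfl (fun i _ => h1 i), Finset.prod_congr rfl (fun K _ => h2 K)]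
    rw [Finset.prod_const, Finset.card_univ]
    have hsplit : ∀ K : {K : List Δ // K ∈ C}, -(tailProb Pm K.1)⁻¹ = (-1) * (tailProb Pm K.1)⁻¹ := by
      intro K; ring
    rw [Finset.prod_congr rfl (fun K _ => hsplit K), Finset.prod_mul_distrib,
      Finset.prod_const, Finset.card_univ, Fintype.card_coe]
    have hinv : (∏ x : {K : List Δ // K ∈ C}, (tailProb Pm x.1)⁻¹)
        = (∏ A ∈ C, tailProb Pm A)⁻¹ := by
      rw [Finset.prod_inv_distrib]
      congr 1
      exact Finset.prod_coe_sort C (fun A => tailProb Pm A)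
    rw [hinv, pow_add, div_eq_mul_inv]
    ring
  -- the coefficient of p at D
  have hcoeff : p.coeff D = (-1 : ℝ) ^ (Fintype.card Δ + C.card) / ∏ A ∈ C, tailProb Pm A := by
    rw [hp, Matrix.det_apply, Polynomial.finset_sum_coeff]
    rw [Finset.sum_eq_single (1 : Equiv.Perm n)]
    · simp only [Polynomial.coeff_smul, hterm 1]
      simp only [Equiv.Perm.sign_one, one_smul, Equiv.Perm.one_apply]
      have h1 := hterm 1
      simp only [Equiv.Perm.one_apply] at h1
      rw [h1]
      exact hidterm
    · intro σ _ hσ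
      rw [Polynomial.coeff_smul, hterm σ, hvanish σ hσ, smul_zero]
    · intro h; exact absurd (Finset.mem_univ _) h
  have hL : ((-1 : ℝ) ^ (Fintype.card Δ + C.card) / ∏ A ∈ C, tailProb Pm A) ≠ 0 :=
    div_ne_zero (by positivity) hC
  have hcoeffne : p.coeff D ≠ 0 := by rw [hcoeff]; exact hL
  -- degree bound for p
  have hdegle : p.natDegree ≤ D := by
    rw [hp, Matrix.det_apply]
    refine Polynomial.natDegree_sum_le_of_forall_le _ _ fun σ _ => ?_
    have hq : (∏ c : n, M (σ c) c).natDegree ≤ D := by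
      refine le_trans (Polynomial.natDegree_prod_le _ _) ?_
      calc ∑ c : n, (M (σ c) c).natDegree
          ≤ ∑ c : n, (e (σ c) + 1) := Finset.sum_le_sum fun c _ => hbound (σ c) c
        _ = ∑ c : n, (e c + 1) := Equiv.sum_comp σ (fun c => e c + 1)
        _ = D := hsumD
    rcases Int.units_eq_one_or (Equiv.Perm.sign σ) with h | h <;> rw [h]
    · rwa [one_smul]
    · rw [Units.smul_def, Units.val_neg, Units.val_one, neg_one_zsmul,
        Polynomial.natDegree_neg]
      exact hq
  have hpne : p ≠ 0 := fun h => hcoeffne (by rw [h, Polynomial.coeff_zero])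
  have hdeg : p.natDegree = D :=
    le_antisymm hdegle (Polynomial.le_natDegree_of_ne_zero hcoeffne)
  have heval : ∀ z : ℝ, p.eval z = (Qmat Pm C z).det := by
    intro z
    have h2 := RingHom.map_det (Polynomial.evalRingHom z) M
    rw [RingHom.mapMatrix_apply, map_Qpoly Pm C z] at h2
    simpa using h2
  refine ⟨p, heval, hpne, hdeg, ?_, ?_⟩
  · rw [Polynomial.leadingCoeff, hdeg, hcoeff]
  · have : {z : ℝ | (Qmat Pm C z).det = 0} = {z : ℝ | p.IsRoot z} := by
      ext z
      simp [Polynomial.IsRoot, heval z]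
    rw [this]
    exact Polynomial.finite_setOf_isRoot hpne
end

section
/- (Example 1, generating function) For the Markov chain on {1,2,3} with uniform initial distribution, transition rows (3/4,0,1/4), (0,3/4,1/4), (1/4,1/4,1/2), and 𝒞 = {323, 313, 33}, for 0 < α ≤ 1 one has E(α^τ) = α²(α²−16)/(3(3α³+24α−32)). -/
open MeasureTheory

/-- The transition matrix of Example 1, on `Fin 3` (state `s` of the paper is `s-1`). -/
noncomputable def exPm : Fin 3 → Fin 3 → ℝ :=
  fun i j => (!![3/4, 0, 1/4; 0, 3/4, 1/4; 1/4, 1/4, 1/2] : Matrix (Fin 3) (Fin 3) ℝ) i j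

/-- `𝒞 = {323, 313, 33}` of Example 1, coded on `Fin 3` (so `3 ↦ 2`, `2 ↦ 1`, `1 ↦ 0`). -/
def exC : Finset (List (Fin 3)) := {[2,1,2], [2,0,2], [2,2]}

section Statement12Aux
namespace St12

abbrev S3 := Fin 3

noncomputable def wgt (l : List S3) : ℝ := (1/3) * tailProb exPm l
def hitL (l : List S3) : Prop := ∃ K ∈ exC, K <:+ l
def surv (l : List S3) : Prop := ∀ m ≤ l.length, ¬ hitL (l.take m)
def fha (l : List S3) : Prop := hitL l ∧ ∀ m < l.length, ¬ hitL (l.take m)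
def shD (l : List S3) : Prop := [2] <:+ l
def shB (l : List S3) : Prop := [2,0] <:+ l ∨ [2,1] <:+ l
def shC (l : List S3) : Prop := l ≠ [] ∧ ¬ shD l ∧ ¬ shB l

instance : DecidablePred hitL := fun l => by unfold hitL; infer_instance
instance : DecidablePred surv := fun l => by unfold surv; infer_instance
instance : DecidablePred fha := fun l => by unfold fha; infer_instance
instance : DecidablePred shD := fun l => by unfold shD; infer_instance
instance : DecidablePred shB := fun l => by unfold shB; infer_instance
instance : DecidablePred shC := fun l => by unfold shC; infer_instance

lemma suffix_concat_iff {α : Type*} (K l : List α) (b j : α) :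
    (K ++ [b]) <:+ (l ++ [j]) ↔ K <:+ l ∧ b = j := by
  rw [← List.reverse_prefix]
  simp only [List.reverse_append, List.reverse_singleton, List.singleton_append,
    List.cons_prefix_cons, List.reverse_prefix]
  tauto

lemma hitL_iff (l : List S3) :
    hitL l ↔ ([2,1,2] <:+ l ∨ [2,0,2] <:+ l ∨ [2,2] <:+ l) := by
  simp [hitL, exC]

lemma shD_concat (l : List S3) (j : S3) : shD (l ++ [j]) ↔ j = 2 := by
  unfold shD
  rw [show ([2] : List S3) = [] ++ [2] from rfl, suffix_concat_iff]
  simp [eq_comm]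

lemma shB_concat (l : List S3) (j : S3) :
    shB (l ++ [j]) ↔ (j = 0 ∨ j = 1) ∧ shD l := by
  unfold shB shD
  rw [show ([2,0] : List S3) = [2] ++ [0] from rfl,
      show ([2,1] : List S3) = [2] ++ [1] from rfl,
      suffix_concat_iff, suffix_concat_iff]
  constructor
  · rintro (⟨h, rfl⟩ | ⟨h, rfl⟩) <;> simp [h]
  · rintro ⟨(rfl | rfl), h⟩ <;> simp [h]

lemma shC_concat (l : List S3) (j : S3) :
    shC (l ++ [j]) ↔ j ≠ 2 ∧ ¬ ((j = 0 ∨ j = 1) ∧ shD l) := by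
  unfold shC
  rw [shD_concat, shB_concat]
  simp

lemma hitL_concat (l : List S3) (j : S3) :
    hitL (l ++ [j]) ↔ j = 2 ∧ (shD l ∨ shB l) := by
  rw [hitL_iff,
      show ([2,1,2] : List S3) = [2,1] ++ [2] from rfl,
      show ([2,0,2] : List S3) = [2,0] ++ [2] from rfl,
      show ([2,2] : List S3) = [2] ++ [2] from rfl,
      suffix_concat_iff, suffix_concat_iff, suffix_concat_iff]
  unfold shD shB
  constructor
  · rintro (⟨h, rfl⟩ | ⟨h, rfl⟩ | ⟨h, rfl⟩) <;> tauto
  · rintro ⟨rfl, (h | h | h)⟩ <;> tauto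

lemma take_concat_le (l : List S3) (j : S3) {m : ℕ} (hm : m ≤ l.length) :
    (l ++ [j]).take m = l.take m := List.take_append_of_le_length hm

lemma surv_concat (l : List S3) (j : S3) :
    surv (l ++ [j]) ↔ surv l ∧ ¬ hitL (l ++ [j]) := by
  constructor
  · intro h
    refine ⟨fun m hm => ?_, ?_⟩
    · have := h m (by simp; omega)
      rwa [take_concat_le l j hm] at this
    · have := h (l.length + 1) (by simp)
      rwa [List.take_of_length_le (by simp)] at this
  · rintro ⟨h1, h2⟩ m hm
    rcases Nat.lt_or_ge m (l.length + 1) with h | h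
    · rw [take_concat_le l j (by omega)]; exact h1 m (by omega)
    · rw [List.take_of_length_le (by simp; omega)]; exact h2

lemma fha_concat (l : List S3) (j : S3) :
    fha (l ++ [j]) ↔ surv l ∧ hitL (l ++ [j]) := by
  unfold fha surv
  constructor
  · rintro ⟨h1, h2⟩
    refine ⟨fun m hm => ?_, h1⟩
    have := h2 m (by simp; omega)
    rwa [take_concat_le l j hm] at this
  · rintro ⟨h1, h2⟩
    refine ⟨h2, fun m hm => ?_⟩
    rw [take_concat_le l j (by simp at hm; omega)]
    exact h1 m (by simp at hm; omega)

lemma exPm_00 : exPm 0 0 = 3/4 := by norm_num [exPm]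
lemma exPm_01 : exPm 0 1 = 0 := by norm_num [exPm]
lemma exPm_02 : exPm 0 2 = 1/4 := by norm_num [exPm, Matrix.cons_val_two, Matrix.vecHead, Matrix.vecTail]
lemma exPm_10 : exPm 1 0 = 0 := by norm_num [exPm]
lemma exPm_11 : exPm 1 1 = 3/4 := by norm_num [exPm]
lemma exPm_12 : exPm 1 2 = 1/4 := by norm_num [exPm, Matrix.cons_val_two, Matrix.vecHead, Matrix.vecTail]
lemma exPm_20 : exPm 2 0 = 1/4 := by norm_num [exPm, Matrix.cons_val_two, Matrix.vecHead, Matrix.vecTail]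
lemma exPm_21 : exPm 2 1 = 1/4 := by norm_num [exPm, Matrix.cons_val_two, Matrix.vecHead, Matrix.vecTail]
lemma exPm_22 : exPm 2 2 = 1/2 := by norm_num [exPm, Matrix.cons_val_two, Matrix.vecHead, Matrix.vecTail]

lemma S3_cases (x : S3) : x = 0 ∨ x = 1 ∨ x = 2 := by revert x; decide

lemma exPm_nonneg (i j : S3) : 0 ≤ exPm i j := by
  rcases S3_cases i with rfl|rfl|rfl <;> rcases S3_cases j with rfl|rfl|rfl <;>
    norm_num [exPm_00, exPm_01, exPm_02, exPm_10, exPm_11, exPm_12, exPm_20, exPm_21, exPm_22]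

lemma exPm_row_sum (i : S3) : exPm i 0 + exPm i 1 + exPm i 2 = 1 := by
  rcases S3_cases i with rfl|rfl|rfl <;>
    norm_num [exPm_00, exPm_01, exPm_02, exPm_10, exPm_11, exPm_12, exPm_20, exPm_21, exPm_22]

lemma tailProb_single (Pm : S3 → S3 → ℝ) (a : S3) : tailProb Pm [a] = 1 := by
  simp [tailProb]

lemma tailProb_cons (Pm : S3 → S3 → ℝ) (a b : S3) (t : List S3) :
    tailProb Pm (a :: b :: t) = Pm a b * tailProb Pm (b :: t) := by
  simp [tailProb]

lemma tailProb_nonneg (Pm : S3 → S3 → ℝ) (h : ∀ i j, 0 ≤ Pm i j) :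
    ∀ l : List S3, 0 ≤ tailProb Pm l := by
  intro l
  induction l with
  | nil => simp [tailProb]
  | cons a t ih =>
    cases t with
    | nil => simp [tailProb]
    | cons b t' => rw [tailProb_cons]; exact mul_nonneg (h a b) ih

lemma tailProb_concat (Pm : S3 → S3 → ℝ) (l : List S3) (hl : l ≠ []) (j : S3) :
    tailProb Pm (l ++ [j]) = tailProb Pm l * Pm (l.getLast hl) j := by
  induction l with
  | nil => simp at hl
  | cons a t ih =>
    cases t with
    | nil => simp [tailProb]
    | cons b t' =>
      show tailProb Pm (a :: b :: (t' ++ [j])) = _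
      rw [tailProb_cons, show (b :: (t' ++ [j])) = ((b :: t') ++ [j]) from rfl, ih (by simp)]
      conv_rhs => rw [tailProb_cons, List.getLast_cons (by simp : (b :: t') ≠ [])]
      ring

lemma wgt_nonneg (l : List S3) : 0 ≤ wgt l := by
  unfold wgt
  have := tailProb_nonneg exPm exPm_nonneg l
  positivity

lemma wgt_concat (l : List S3) (hl : l ≠ []) (j : S3) :
    wgt (l ++ [j]) = wgt l * exPm (l.getLast hl) j := by
  unfold wgt; rw [tailProb_concat exPm l hl j]; ring

lemma wgt_single (a : S3) : wgt [a] = 1/3 := by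
  simp [wgt, tailProb_single]

lemma wgt_concat' (t : List S3) (x j : S3) :
    wgt (t ++ [x] ++ [j]) = wgt (t ++ [x]) * exPm x j := by
  rw [wgt_concat (t ++ [x]) (by simp) j, List.getLast_concat]

noncomputable def SumF (n : ℕ) (F : List S3 → ℝ) : ℝ := ∑ v : Fin n → S3, F (List.ofFn v)

lemma ofFn_snoc {n : ℕ} (u : Fin n → S3) (j : S3) :
    List.ofFn (Fin.snoc u j) = List.ofFn u ++ [j] := by
  rw [List.ofFn_succ']
  simp [List.concat_eq_append]

lemma SumF_succ (n : ℕ) (F : List S3 → ℝ) :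
    SumF (n+1) F = ∑ v : Fin n → S3, ∑ j : S3, F (List.ofFn v ++ [j]) := by
  rw [SumF, ← Equiv.sum_comp (Fin.snocEquiv (fun _ => S3)) (fun v => F (List.ofFn v)),
    Fintype.sum_prod_type]
  rw [Finset.sum_comm]
  apply Finset.sum_congr rfl; intro u _
  apply Finset.sum_congr rfl; intro j _
  show F (List.ofFn (Fin.snoc u j)) = _
  rw [ofFn_snoc]

lemma SumF_one (F : List S3 → ℝ) : SumF 1 F = ∑ j : S3, F [j] := by
  apply Fintype.sum_equiv (Equiv.funUnique (Fin 1) S3)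
  intro v
  congr 1



lemma perD (t : List S3) (x : S3) :
    ∑ j : S3, (if surv ((t++[x]) ++ [j]) ∧ shD ((t++[x]) ++ [j]) then wgt ((t++[x]) ++ [j]) else 0)
      = (1/4) * (if surv (t++[x]) ∧ shC (t++[x]) then wgt (t++[x]) else 0) := by
  rw [Fin.sum_univ_three]
  simp only [surv_concat (t++[x]), shD_concat (t++[x]), shB_concat (t++[x]),
    shC_concat (t++[x]), hitL_concat (t++[x]), fha_concat (t++[x]), wgt_concat' t x,
    shD_concat t, shB_concat t, shC_concat t]
  rcases S3_cases x with rfl|rfl|rfl <;>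
    by_cases hd : shD t <;>
    simp [hd, exPm_00, exPm_01, exPm_02, exPm_10, exPm_11, exPm_12, exPm_20, exPm_21, exPm_22] <;>
    split_ifs <;> first | ring | tauto

lemma perB (t : List S3) (x : S3) :
    ∑ j : S3, (if surv ((t++[x]) ++ [j]) ∧ shB ((t++[x]) ++ [j]) then wgt ((t++[x]) ++ [j]) else 0)
      = (1/2) * (if surv (t++[x]) ∧ shD (t++[x]) then wgt (t++[x]) else 0) := by
  rw [Fin.sum_univ_three]
  simp only [surv_concat (t++[x]), shD_concat (t++[x]), shB_concat (t++[x]),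
    shC_concat (t++[x]), hitL_concat (t++[x]), fha_concat (t++[x]), wgt_concat' t x,
    shD_concat t, shB_concat t, shC_concat t]
  rcases S3_cases x with rfl|rfl|rfl <;>
    by_cases hd : shD t <;>
    simp [hd, exPm_00, exPm_01, exPm_02, exPm_10, exPm_11, exPm_12, exPm_20, exPm_21, exPm_22] <;>
    split_ifs <;> first | ring | tauto

lemma perC (t : List S3) (x : S3) :
    ∑ j : S3, (if surv ((t++[x]) ++ [j]) ∧ shC ((t++[x]) ++ [j]) then wgt ((t++[x]) ++ [j]) else 0)
      = (3/4) * ((if surv (t++[x]) ∧ shB (t++[x]) then wgt (t++[x]) else 0)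
          + (if surv (t++[x]) ∧ shC (t++[x]) then wgt (t++[x]) else 0)) := by
  rw [Fin.sum_univ_three]
  simp only [surv_concat (t++[x]), shD_concat (t++[x]), shB_concat (t++[x]),
    shC_concat (t++[x]), hitL_concat (t++[x]), fha_concat (t++[x]), wgt_concat' t x,
    shD_concat t, shB_concat t, shC_concat t]
  rcases S3_cases x with rfl|rfl|rfl <;>
    by_cases hd : shD t <;>
    simp [hd, exPm_00, exPm_01, exPm_02, exPm_10, exPm_11, exPm_12, exPm_20, exPm_21, exPm_22] <;>
    split_ifs <;> first | ring | tauto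

lemma perP (t : List S3) (x : S3) :
    ∑ j : S3, (if fha ((t++[x]) ++ [j]) then wgt ((t++[x]) ++ [j]) else 0)
      = (1/2) * (if surv (t++[x]) ∧ shD (t++[x]) then wgt (t++[x]) else 0)
        + (1/4) * (if surv (t++[x]) ∧ shB (t++[x]) then wgt (t++[x]) else 0) := by
  rw [Fin.sum_univ_three]
  simp only [surv_concat (t++[x]), shD_concat (t++[x]), shB_concat (t++[x]),
    shC_concat (t++[x]), hitL_concat (t++[x]), fha_concat (t++[x]), wgt_concat' t x,
    shD_concat t, shB_concat t, shC_concat t]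
  rcases S3_cases x with rfl|rfl|rfl <;>
    by_cases hd : shD t <;>
    simp [hd, exPm_00, exPm_01, exPm_02, exPm_10, exPm_11, exPm_12, exPm_20, exPm_21, exPm_22] <;>
    split_ifs <;> first | ring | tauto


noncomputable def pS (n : ℕ) : ℝ := SumF n (fun l => if fha l then wgt l else 0)
noncomputable def bS (n : ℕ) : ℝ := SumF n (fun l => if surv l ∧ shB l then wgt l else 0)
noncomputable def cS (n : ℕ) : ℝ := SumF n (fun l => if surv l ∧ shC l then wgt l else 0)
noncomputable def dS (n : ℕ) : ℝ := SumF n (fun l => if surv l ∧ shD l then wgt l else 0)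

lemma ofFn_concat_form {n : ℕ} (v : Fin (n+1) → S3) :
    ∃ t x, List.ofFn v = t ++ [x] := by
  rcases List.eq_nil_or_concat' (List.ofFn v) with h | ⟨t, x, h⟩
  · simp at h
  · exact ⟨t, x, h⟩

lemma dS_succ (n : ℕ) : dS (n+2) = (1/4) * cS (n+1) := by
  rw [dS, SumF_succ, cS, SumF, Finset.mul_sum]
  apply Finset.sum_congr rfl
  intro v _
  obtain ⟨t, x, hv⟩ := ofFn_concat_form v
  rw [hv]
  exact perD t x

lemma bS_succ (n : ℕ) : bS (n+2) = (1/2) * dS (n+1) := by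
  rw [bS, SumF_succ, dS, SumF, Finset.mul_sum]
  apply Finset.sum_congr rfl
  intro v _
  obtain ⟨t, x, hv⟩ := ofFn_concat_form v
  rw [hv]
  exact perB t x

lemma cS_succ (n : ℕ) : cS (n+2) = (3/4) * (bS (n+1) + cS (n+1)) := by
  rw [cS, SumF_succ, bS, cS, SumF, SumF, ← Finset.sum_add_distrib, Finset.mul_sum]
  apply Finset.sum_congr rfl
  intro v _
  obtain ⟨t, x, hv⟩ := ofFn_concat_form v
  rw [hv]
  exact perC t x

lemma pS_succ (n : ℕ) : pS (n+2) = (1/2) * dS (n+1) + (1/4) * bS (n+1) := by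
  rw [pS, SumF_succ, dS, bS, SumF, SumF, Finset.mul_sum, Finset.mul_sum, ← Finset.sum_add_distrib]
  apply Finset.sum_congr rfl
  intro v _
  obtain ⟨t, x, hv⟩ := ofFn_concat_form v
  rw [hv]
  exact perP t x

lemma surv_single : ∀ j : S3, surv [j] := by decide

lemma pS_one : pS 1 = 0 := by
  rw [pS, SumF_one]
  have h : ∀ j : S3, ¬ fha [j] := by decide
  simp [h]

lemma bS_one : bS 1 = 0 := by
  rw [bS, SumF_one]
  have h : ∀ j : S3, ¬ shB [j] := by decide
  simp [h]

lemma cS_one : cS 1 = 2/3 := by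
  rw [cS, SumF_one, Fin.sum_univ_three]
  have h0 : surv [(0:S3)] ∧ shC [0] := ⟨surv_single 0, by decide⟩
  have h1 : surv [(1:S3)] ∧ shC [1] := ⟨surv_single 1, by decide⟩
  have h2 : ¬ shC [(2:S3)] := by decide
  rw [if_pos h0, if_pos h1, if_neg (by tauto)]
  rw [wgt_single, wgt_single]; norm_num

lemma dS_one : dS 1 = 1/3 := by
  rw [dS, SumF_one, Fin.sum_univ_three]
  have h0 : ¬ shD [(0:S3)] := by decide
  have h1 : ¬ shD [(1:S3)] := by decide
  have h2 : surv [(2:S3)] ∧ shD [2] := ⟨surv_single 2, by decide⟩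
  rw [if_neg (by tauto), if_neg (by tauto), if_pos h2, wgt_single]; norm_num

lemma pS_nonneg (n : ℕ) : 0 ≤ pS n :=
  Finset.sum_nonneg fun v _ => by dsimp only; split_ifs; exacts [wgt_nonneg _, le_refl 0]
lemma bS_nonneg (n : ℕ) : 0 ≤ bS n :=
  Finset.sum_nonneg fun v _ => by dsimp only; split_ifs; exacts [wgt_nonneg _, le_refl 0]
lemma cS_nonneg (n : ℕ) : 0 ≤ cS n :=
  Finset.sum_nonneg fun v _ => by dsimp only; split_ifs; exacts [wgt_nonneg _, le_refl 0]
lemma dS_nonneg (n : ℕ) : 0 ≤ dS n :=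
  Finset.sum_nonneg fun v _ => by dsimp only; split_ifs; exacts [wgt_nonneg _, le_refl 0]

lemma bcd_bound (n : ℕ) (hn : 1 ≤ n) :
    bS n ≤ (6/5) * (19/20)^n ∧ cS n ≤ 8 * (19/20)^n ∧ dS n ≤ (11/5) * (19/20)^n := by
  induction n, hn using Nat.le_induction with
  | base => rw [bS_one, cS_one, dS_one]; norm_num
  | succ m hm ih =>
    obtain ⟨hb, hc, hd⟩ := ih
    obtain ⟨m', rfl⟩ : ∃ m', m = m' + 1 := ⟨m - 1, by omega⟩
    have hr := pow_pos (show (0:ℝ) < 19/20 by norm_num) (m'+1)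
    refine ⟨?_, ?_, ?_⟩
    · rw [bS_succ, pow_succ]; nlinarith
    · rw [cS_succ, pow_succ]; nlinarith
    · rw [dS_succ, pow_succ]; nlinarith

lemma bS_le (n : ℕ) : bS (n+1) ≤ 8 * (19/20)^n := by
  cases n with
  | zero => rw [bS_one]; norm_num
  | succ m =>
    have h := (bcd_bound (m+2) (by omega)).1
    have hr := pow_pos (show (0:ℝ) < 19/20 by norm_num) (m+1)
    rw [pow_succ] at h; nlinarith

lemma cS_le (n : ℕ) : cS (n+1) ≤ 8 * (19/20)^n := by
  cases n with
  | zero => rw [cS_one]; norm_num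
  | succ m =>
    have h := (bcd_bound (m+2) (by omega)).2.1
    have hr := pow_pos (show (0:ℝ) < 19/20 by norm_num) (m+1)
    rw [pow_succ] at h; nlinarith

lemma dS_le (n : ℕ) : dS (n+1) ≤ 8 * (19/20)^n := by
  cases n with
  | zero => rw [dS_one]; norm_num
  | succ m =>
    have h := (bcd_bound (m+2) (by omega)).2.2
    have hr := pow_pos (show (0:ℝ) < 19/20 by norm_num) (m+1)
    rw [pow_succ] at h; nlinarith

lemma pS_le (n : ℕ) : pS (n+1) ≤ 8 * (19/20)^n := by
  cases n with
  | zero => rw [pS_one]; positivity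
  | succ m =>
    have hb := (bcd_bound (m+1) (by omega)).1
    have hd := (bcd_bound (m+1) (by omega)).2.2
    have hr := pow_pos (show (0:ℝ) < 19/20 by norm_num) (m+1)
    rw [pow_succ] at hb hd hr
    rw [pS_succ, pow_succ]; nlinarith


lemma getLast_ofFn {m : ℕ} (u : Fin (m+1) → S3) :
    (List.ofFn u).getLast (by simp) = u (Fin.last m) := by
  rw [List.getLast_eq_getElem, List.getElem_ofFn]
  congr 1
  ext
  simp

lemma ofFn_split {m : ℕ} (v : Fin (m+2) → S3) :
    List.ofFn v = (List.ofFn fun k : Fin (m+1) => v k.castSucc) ++ [v (Fin.last (m+1))] := by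
  rw [List.ofFn_succ']
  simp [List.concat_eq_append]

lemma wgt_ofFn_succ {m : ℕ} (v : Fin (m+2) → S3) :
    wgt (List.ofFn v)
      = wgt (List.ofFn fun k : Fin (m+1) => v k.castSucc)
          * exPm (v ((Fin.last m).castSucc)) (v (Fin.last (m+1))) := by
  rw [ofFn_split v, wgt_concat _ (by simp) (v (Fin.last (m+1)))]
  congr 2
  rw [getLast_ofFn]

variable {Ω : Type*} [MeasurableSpace Ω] (P : Measure Ω) [IsProbabilityMeasure P]
  (Z : ℕ → Ω → S3)

def Cyl (n : ℕ) (v : Fin n → S3) : Set Ω := {ω | ∀ k : Fin n, Z (↑k + 1) ω = v k}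

lemma cyl_meas (hM : IsMarkov P Z exPm) (hinit : ∀ j : S3, (P {ω | Z 1 ω = j}).toReal = 1/3) :
    ∀ n (v : Fin (n+1) → S3), (P (Cyl Z (n+1) v)).toReal = wgt (List.ofFn v) := by
  intro n
  induction n with
  | zero =>
    intro v
    have h1 : Cyl Z 1 v = {ω | Z 1 ω = v 0} := by
      ext ω
      constructor
      · intro h; simpa using h 0
      · intro h k; fin_cases k; simpa using h
    rw [h1, hinit, show List.ofFn v = [v 0] by simp [List.ofFn_succ], wgt_single]
  | succ m ih =>
    intro v
    set w : ℕ → S3 := fun k => if h : k - 1 < m + 2 then v ⟨k-1, h⟩ else 0 with hw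
    have key := hM (m+1) w (v (Fin.last (m+1))) (by omega)
    have e1 : {ω | (∀ k, 1 ≤ k → k ≤ m+1 → Z k ω = w k) ∧ Z (m+1+1) ω = v (Fin.last (m+1))}
        = Cyl Z (m+2) v := by
      ext ω
      constructor
      · rintro ⟨h1, h2⟩ k
        rcases Nat.lt_or_ge (k : ℕ) (m+1) with hk | hk
        · have h3 := h1 ((k : ℕ)+1) (by omega) (by omega)
          rw [h3]
          simp only [hw]
          rw [dif_pos (by omega : (k:ℕ)+1-1 < m+2)]
          have he : (⟨(k:ℕ)+1-1, by omega⟩ : Fin (m+2)) = k := by ext; simp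
          rw [he]
        · have hk' : (k:ℕ) = m+1 := by omega
          have h4 : k = Fin.last (m+1) := by ext; simpa using hk'
          rw [h4]
          simpa [hk'] using h2
      · intro h
        constructor
        · intro k hk1 hk2
          have h5 : Z (k-1+1) ω = v ⟨k-1, by omega⟩ := h ⟨k-1, by omega⟩
          rw [show k-1+1 = k from by omega] at h5
          simp only [hw]
          rw [dif_pos (by omega : k - 1 < m+2)]
          exact h5
        · simpa using h (Fin.last (m+1))
    have e2 : {ω | ∀ k, 1 ≤ k → k ≤ m+1 → Z k ω = w k}
        = Cyl Z (m+1) (fun k => v k.castSucc) := by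
      ext ω
      constructor
      · intro h k
        have h3 := h ((k:ℕ)+1) (by omega) (by omega)
        rw [h3]
        simp only [hw]
        rw [dif_pos (by omega : (k:ℕ)+1-1 < m+2)]
        have he : (⟨(k:ℕ)+1-1, by omega⟩ : Fin (m+2)) = k.castSucc := by ext; simp
        rw [he]
      · intro h k hk1 hk2
        have h5 : Z (k-1+1) ω = v (⟨k-1, by omega⟩ : Fin (m+1)).castSucc := h ⟨k-1, by omega⟩
        rw [show k-1+1 = k from by omega] at h5
        simp only [hw]
        rw [dif_pos (by omega : k - 1 < m+2)]
        have he : (⟨k-1, by omega⟩ : Fin (m+2)) = (⟨k-1, by omega⟩ : Fin (m+1)).castSucc := by ext; simp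
        rw [he]
        exact h5
    rw [e1, e2, ih (fun k => v k.castSucc)] at key
    have hwm : w (m+1) = v ((Fin.last m).castSucc) := by
      simp only [hw]
      rw [dif_pos (by omega : m+1-1 < m+2)]
      have he : (⟨m+1-1, by omega⟩ : Fin (m+2)) = (Fin.last m).castSucc := by ext; simp
      rw [he]
    rw [hwm] at key
    rw [key, wgt_ofFn_succ v]

lemma sum_wgt : ∀ n : ℕ, SumF (n+1) wgt = 1 := by
  intro n
  induction n with
  | zero =>
    rw [SumF_one]
    simp only [wgt_single]
    rw [Fin.sum_univ_three]
    norm_num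
  | succ m ih =>
    rw [SumF_succ]
    have h : ∀ v : Fin (m+1) → S3, ∑ j : S3, wgt (List.ofFn v ++ [j]) = wgt (List.ofFn v) := by
      intro v
      obtain ⟨t, x, hv⟩ := ofFn_concat_form v
      rw [hv, Fin.sum_univ_three, wgt_concat' t x, wgt_concat' t x, wgt_concat' t x,
        ← mul_add, ← mul_add, exPm_row_sum, mul_one]
    rw [Finset.sum_congr rfl (fun v _ => h v)]
    exact ih

lemma meas_event (hM : IsMarkov P Z exPm) (hinit : ∀ j : S3, (P {ω | Z 1 ω = j}).toReal = 1/3)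
    (n : ℕ) (Q : List S3 → Prop) [DecidablePred Q] :
    (P {ω | Q (List.ofFn fun k : Fin (n+1) => Z (↑k + 1) ω)}).toReal
      = ∑ v : Fin (n+1) → S3, if Q (List.ofFn v) then wgt (List.ofFn v) else 0 := by
  classical
  set E : Set Ω := {ω | Q (List.ofFn fun k : Fin (n+1) => Z (↑k + 1) ω)} with hE
  set E' : Set Ω := {ω | ¬ Q (List.ofFn fun k : Fin (n+1) => Z (↑k + 1) ω)} with hE'
  set A : Finset (Fin (n+1) → S3) := Finset.univ.filter (fun v => Q (List.ofFn v)) with hA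
  set A' : Finset (Fin (n+1) → S3) := Finset.univ.filter (fun v => ¬ Q (List.ofFn v)) with hA'
  have hcyl : ∀ v : Fin (n+1) → S3, P (Cyl Z (n+1) v) = ENNReal.ofReal (wgt (List.ofFn v)) := by
    intro v
    rw [← cyl_meas P Z hM hinit n v, ENNReal.ofReal_toReal (measure_ne_top P _)]
  have hsub : ∀ (B : Finset (Fin (n+1) → S3)),
      P (⋃ v ∈ B, Cyl Z (n+1) v) ≤ ENNReal.ofReal (∑ v ∈ B, wgt (List.ofFn v)) := by
    intro B
    have hb : P (⋃ v ∈ B, Cyl Z (n+1) v) ≤ ∑ v ∈ B, P (Cyl Z (n+1) v) :=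
      measure_biUnion_finset_le (F := Measure Ω) (μ := P) B _
    refine le_trans hb ?_
    rw [ENNReal.ofReal_sum_of_nonneg (fun v _ => wgt_nonneg _)]
    exact le_of_eq (Finset.sum_congr rfl fun v _ => hcyl v)
  have hEA : E ⊆ ⋃ v ∈ A, Cyl Z (n+1) v := by
    intro ω hω
    exact Set.mem_biUnion (Finset.mem_coe.mpr (Finset.mem_filter.mpr ⟨Finset.mem_univ _, hω⟩))
      (fun k => rfl)
  have hEA' : E' ⊆ ⋃ v ∈ A', Cyl Z (n+1) v := by
    intro ω hω
    exact Set.mem_biUnion (Finset.mem_coe.mpr (Finset.mem_filter.mpr ⟨Finset.mem_univ _, hω⟩))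
      (fun k => rfl)
  have h1 : (P E).toReal ≤ ∑ v ∈ A, wgt (List.ofFn v) := by
    have h := (measure_mono hEA).trans (hsub A)
    have := ENNReal.toReal_mono ENNReal.ofReal_ne_top h
    rwa [ENNReal.toReal_ofReal (Finset.sum_nonneg fun v _ => wgt_nonneg _)] at this
  have h2 : (P E').toReal ≤ ∑ v ∈ A', wgt (List.ofFn v) := by
    have h := (measure_mono hEA').trans (hsub A')
    have := ENNReal.toReal_mono ENNReal.ofReal_ne_top h
    rwa [ENNReal.toReal_ofReal (Finset.sum_nonneg fun v _ => wgt_nonneg _)] at this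
  have h3 : 1 ≤ (P E).toReal + (P E').toReal := by
    have hu : (Set.univ : Set Ω) ⊆ E ∪ E' := by
      intro ω _
      by_cases h : Q (List.ofFn fun k : Fin (n+1) => Z (↑k + 1) ω)
      · exact Or.inl h
      · exact Or.inr h
    have h : P Set.univ ≤ P E + P E' :=
      le_trans (measure_mono hu) (measure_union_le (F := Measure Ω) (μ := P) E E')
    rw [measure_univ] at h
    have hfin : P E + P E' ≠ ⊤ :=
      ENNReal.add_ne_top.mpr ⟨measure_ne_top P _, measure_ne_top P _⟩
    have := ENNReal.toReal_mono hfin h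
    rwa [ENNReal.toReal_one, ENNReal.toReal_add (measure_ne_top P _) (measure_ne_top P _)] at this
  have h4 : ∑ v ∈ A, wgt (List.ofFn v) + ∑ v ∈ A', wgt (List.ofFn v) = 1 := by
    rw [hA, hA', Finset.sum_filter_add_sum_filter_not]
    exact sum_wgt n
  have h5 : (P E).toReal = ∑ v ∈ A, wgt (List.ofFn v) := le_antisymm h1 (by linarith)
  rw [h5, hA, Finset.sum_filter]

section Word
variable {Ω : Type*} (Z : ℕ → Ω → S3)

def word (ω : Ω) (m : ℕ) : List S3 := List.ofFn fun k : Fin m => Z (↑k + 1) ω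

@[simp] lemma word_length (ω : Ω) (m : ℕ) : (word Z ω m).length = m := by simp [word]

lemma word_take (ω : Ω) {m n : ℕ} (h : m ≤ n) : (word Z ω n).take m = word Z ω m := by
  apply List.ext_getElem (by simp; omega)
  intro i h1 h2
  simp only [word, List.getElem_take, List.getElem_ofFn]

lemma occursAt_iff (K : List S3) (ω : Ω) (m : ℕ) :
    occursAt Z K ω m ↔ K <:+ word Z ω m := by
  constructor
  · rintro ⟨hlen, h⟩
    rw [List.suffix_iff_eq_drop]
    apply List.ext_getElem
    · simp [word]
      omega
    · intro i h1 h2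
      rw [List.getElem_drop]
      have h3 : Z (m - K.length + 1 + i) ω = K[i] := by simpa using h ⟨i, h1⟩
      rw [← h3]
      simp only [word_length, word, List.getElem_ofFn]
      congr 1
      simp
      omega
  · intro hsuf
    obtain ⟨p, hp⟩ := hsuf
    have hlw : p.length + K.length = m := by
      have := congrArg List.length hp
      simpa using this
    refine ⟨by omega, ?_⟩
    intro i
    have hi : p.length + (i:ℕ) < (p ++ K).length := by simp
    have h1 : (p ++ K)[p.length + (i:ℕ)]'hi = K.get i := by
      rw [List.getElem_append_right (by omega)]
      simp
    rw [← h1, List.getElem_of_eq hp]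
    simp only [word, List.getElem_ofFn]
    congr 1
    omega

lemma hitTime_eq_iff (ω : Ω) (n : ℕ) :
    hitTime Z exC ω = n + 1 ↔ fha (word Z ω (n+1)) := by
  set T : Set ℕ := {k : ℕ | ∃ K ∈ exC, occursAt Z K ω k} with hT
  have hTT : hitTime Z exC ω = sInf T := rfl
  have hmem : ∀ m, m ∈ T ↔ hitL (word Z ω m) := by
    intro m
    constructor
    · rintro ⟨K, hK, h⟩; exact ⟨K, hK, (occursAt_iff Z K ω m).1 h⟩
    · rintro ⟨K, hK, h⟩; exact ⟨K, hK, (occursAt_iff Z K ω m).2 h⟩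
  rw [hTT]
  constructor
  · intro h
    have hne : T.Nonempty := by
      by_contra hemp
      rw [Set.not_nonempty_iff_eq_empty] at hemp
      rw [hemp, Nat.sInf_empty] at h
      omega
    have h1 := Nat.sInf_mem hne
    rw [h] at h1
    refine ⟨(hmem (n+1)).1 h1, ?_⟩
    intro m hm
    rw [word_length] at hm
    rw [word_take Z ω (by omega : m ≤ n+1)]
    intro hh
    have h6 : sInf T ≤ m := Nat.sInf_le ((hmem m).2 hh)
    omega
  · rintro ⟨h1, h2⟩
    have hmem1 : (n+1) ∈ T := (hmem (n+1)).2 h1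
    refine le_antisymm (Nat.sInf_le hmem1) ?_
    by_contra hlt
    push_neg at hlt
    have hmm : sInf T ∈ T := Nat.sInf_mem ⟨_, hmem1⟩
    have hm2 := h2 (sInf T) (by rw [word_length]; omega)
    rw [word_take Z ω (by omega : sInf T ≤ n+1)] at hm2
    exact hm2 ((hmem _).1 hmm)

end Word

lemma meas_hit {Ω : Type*} [MeasurableSpace Ω] (P : Measure Ω) [IsProbabilityMeasure P]
    (Z : ℕ → Ω → S3) (hM : IsMarkov P Z exPm)
    (hinit : ∀ j : S3, (P {ω | Z 1 ω = j}).toReal = 1/3) (n : ℕ) :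
    (P {ω | hitTime Z exC ω = n + 1}).toReal = pS (n+1) := by
  have hset : {ω | hitTime Z exC ω = n+1}
      = {ω | fha (List.ofFn fun k : Fin (n+1) => Z (↑k+1) ω)} := by
    ext ω
    exact hitTime_eq_iff Z ω n
  rw [hset, meas_event P Z hM hinit n fha]
  rfl


end St12

end Statement12Aux

open St12 in
/-- Example 1, generating function: for `0 < α ≤ 1`,
`E(α^τ) = α²(α²−16)/(3(3α³+24α−32))`. -/
theorem statement12 {Ω : Type*} [MeasurableSpace Ω]
    (P : Measure Ω) [IsProbabilityMeasure P] (Z : ℕ → Ω → Fin 3)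
    (hMarkov : IsMarkov P Z exPm)
    (hinit : ∀ j : Fin 3, (P {ω | Z 1 ω = j}).toReal = 1/3)
    (α : ℝ) (hα0 : 0 < α) (hα1 : α ≤ 1) :
    (∑' n : ℕ, (P {ω | hitTime Z exC ω = n + 1}).toReal * α ^ (n+1))
      = α^2 * (α^2 - 16) / (3 * (3*α^3 + 24*α - 32)) := by

  classical
  have hp : ∀ n : ℕ, (P {ω | hitTime Z exC ω = n + 1}).toReal = pS (n+1) :=
    fun n => meas_hit P Z hMarkov hinit n
  have hgeo : Summable (fun n : ℕ => (8:ℝ) * (19/20)^n) :=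
    (summable_geometric_of_lt_one (by norm_num) (by norm_num)).mul_left 8
  have hαle : ∀ n : ℕ, α ^ (n+1) ≤ 1 := fun n => pow_le_one₀ (le_of_lt hα0) hα1
  have mk_sum : ∀ (f : ℕ → ℝ), (∀ n, 0 ≤ f (n+1)) → (∀ n, f (n+1) ≤ 8*(19/20)^n) →
      Summable (fun n => f (n+1) * α^(n+1)) := by
    intro f h0 h1
    refine Summable.of_nonneg_of_le
      (fun n => mul_nonneg (h0 n) (le_of_lt (pow_pos hα0 _))) (fun n => ?_) hgeo
    have := mul_le_mul (h1 n) (hαle n) (le_of_lt (pow_pos hα0 _)) (by positivity)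
    simpa using this
  have hPsum : Summable (fun n => pS (n+1) * α^(n+1)) :=
    mk_sum pS (fun n => pS_nonneg _) pS_le
  have hBsum : Summable (fun n => bS (n+1) * α^(n+1)) :=
    mk_sum bS (fun n => bS_nonneg _) bS_le
  have hCsum : Summable (fun n => cS (n+1) * α^(n+1)) :=
    mk_sum cS (fun n => cS_nonneg _) cS_le
  have hDsum : Summable (fun n => dS (n+1) * α^(n+1)) :=
    mk_sum dS (fun n => dS_nonneg _) dS_le
  set B := ∑' n : ℕ, bS (n+1) * α^(n+1) with hB
  set C := ∑' n : ℕ, cS (n+1) * α^(n+1) with hC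
  set D := ∑' n : ℕ, dS (n+1) * α^(n+1) with hD
  set E := ∑' n : ℕ, pS (n+1) * α^(n+1) with hE
  have eqB : B = α/2 * D := by
    rw [hB, Summable.tsum_eq_zero_add hBsum, bS_one,
      tsum_congr (fun n : ℕ => show bS (n+1+1) * α^(n+1+1) = (α/2) * (dS (n+1) * α^(n+1)) by
        rw [bS_succ n]; ring), tsum_mul_left, hD]
    ring
  have eqC : C = 2/3*α + (3*α/4) * (B + C) := by
    conv_lhs => rw [hC, Summable.tsum_eq_zero_add hCsum]
    rw [cS_one,
      tsum_congr (fun n : ℕ => show cS (n+1+1) * α^(n+1+1)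
          = (3*α/4) * (bS (n+1) * α^(n+1) + cS (n+1) * α^(n+1)) by
        rw [cS_succ n]; ring), tsum_mul_left, Summable.tsum_add hBsum hCsum, ← hB, ← hC]
    ring
  have eqD : D = 1/3*α + (α/4) * C := by
    rw [hD, Summable.tsum_eq_zero_add hDsum, dS_one,
      tsum_congr (fun n : ℕ => show dS (n+1+1) * α^(n+1+1) = (α/4) * (cS (n+1) * α^(n+1)) by
        rw [dS_succ n]; ring), tsum_mul_left, hC]
    ring
  have eqE : E = α/2 * D + α/4 * B := by
    rw [hE, Summable.tsum_eq_zero_add hPsum, pS_one,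
      tsum_congr (fun n : ℕ => show pS (n+1+1) * α^(n+1+1)
          = (α/2) * (dS (n+1) * α^(n+1)) + (α/4) * (bS (n+1) * α^(n+1)) by
        rw [pS_succ n]; ring),
      Summable.tsum_add (hDsum.mul_left (α/2)) (hBsum.mul_left (α/4)),
      tsum_mul_left, tsum_mul_left, hD, hB]
    ring
  have hden : (3:ℝ)*(3*α^3+24*α-32) ≠ 0 := by nlinarith [sq_nonneg α, sq_nonneg (1-α)]
  have h1 : C * (1 - 3*α/4) = 2*α/3 + 3*α^2/8 * D := by
    linear_combination eqC + (3*α/4) * eqB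
  have hD2 : D * (96 - 72*α - 9*α^3) = 32*α - 8*α^2 := by
    linear_combination (24*α)*h1 + (96 - 72*α)*eqD
  have hE2 : E = (α/2 + α^2/8) * D := by
    linear_combination eqE + (α/4) * eqB
  calc (∑' n : ℕ, (P {ω | hitTime Z exC ω = n + 1}).toReal * α ^ (n+1))
      = E := tsum_congr (fun n => by rw [hp n])
    _ = α^2 * (α^2 - 16) / (3 * (3*α^3 + 24*α - 32)) := by
        rw [eq_div_iff hden]
        linear_combination (3*(3*α^3+24*α-32))*hE2 - (α/2+α^2/8)*hD2
end
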